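/- Assume c_s < 0. Let γ = (γ₁, γ₀, γ₋₁) ∈ ℝ³ with γ_j ≥ 0 for each j, γ₁² + γ₀² + γ₋₁² = 1, and γ₁² − γ₋₁² = M/N, and let f : D → ℝ be a nonnegative C¹ function with ∫_D f² = N and with ‖∇f‖², Vf², f⁴ integrable on D. Then the triple γf = (γ₁ f, γ₀ f, γ₋₁ f) belongs to the admissible class 𝒜, and 𝔼[γf] = ∫_D ( ‖∇f‖² + Vf² ) dx + ( c_n + c_s P(γ) ) ∫_D f⁴ dx, where P(γ) = 2γ₀²(γ₁ + γ₋₁)² + M²/N². In particular 𝔼[γ* f] = ∫_D ( ‖∇f‖² + Vf² + (c_n + c_s) f⁴ ) dx for γ* = ((1 + M/N)/2, √((1 − M²/N²)/2), (1 − M/N)/2). -/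

import Mathlib

noncomputable section

open MeasureTheory

/-- Euclidean space `ℝ^d`. -/
abbrev Euc (d : ℕ) := EuclideanSpace ℝ (Fin d)

/-- The Laplacian of `f : ℝ^d → ℝ`: the sum of the pure second derivatives along the
standard coordinate directions. -/
def lap {d : ℕ} (f : Euc d → ℝ) (x : Euc d) : ℝ :=
  ∑ i : Fin d, fderiv ℝ (fun y => fderiv ℝ f y (EuclideanSpace.single i 1)) x
    (EuclideanSpace.single i 1)

/-- The sign convention in the spin-exchange term: `+` when `c_s < 0`, `−` when `c_s > 0`
(for `c_s = 0` the spin term vanishes, so the choice is immaterial). -/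
def spinSign (cs : ℝ) : ℝ := if cs < 0 then 1 else -1

/-- Total density `|u|² = u₁² + u₀² + u₋₁²`. -/
def rho {d : ℕ} (u1 u0 um1 : Euc d → ℝ) (x : Euc d) : ℝ :=
  (u1 x) ^ 2 + (u0 x) ^ 2 + (um1 x) ^ 2

/-- Spin-exchange energy density `2u₀²(u₁ ± u₋₁)² + (u₁² − u₋₁²)²`. -/
def spinDen {d : ℕ} (cs : ℝ) (u1 u0 um1 : Euc d → ℝ) (x : Euc d) : ℝ :=
  2 * (u0 x) ^ 2 * (u1 x + spinSign cs * um1 x) ^ 2 + ((u1 x) ^ 2 - (um1 x) ^ 2) ^ 2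

/-- Energy density of a triple `(u₁, u₀, u₋₁)`. -/
def eDen {d : ℕ} (V : Euc d → ℝ) (cn cs : ℝ) (u1 u0 um1 : Euc d → ℝ) (x : Euc d) : ℝ :=
  ‖gradient u1 x‖ ^ 2 + ‖gradient u0 x‖ ^ 2 + ‖gradient um1 x‖ ^ 2
    + V x * rho u1 u0 um1 x + cn * (rho u1 u0 um1 x) ^ 2 + cs * spinDen cs u1 u0 um1 x

/-- The energy functional `𝔼[u]`. -/
def Energy {d : ℕ} (D : Set (Euc d)) (V : Euc d → ℝ) (cn cs : ℝ)
    (u1 u0 um1 : Euc d → ℝ) : ℝ :=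
  ∫ x in D, eDen V cn cs u1 u0 um1 x

/-- The admissible class `𝒜`: triples of nonnegative C¹ functions on `D`, every term of the
energy integrable on `D`, total mass `N` and total magnetization `M`. -/
def Admissible {d : ℕ} (D : Set (Euc d)) (V : Euc d → ℝ) (cn cs N M : ℝ)
    (u1 u0 um1 : Euc d → ℝ) : Prop :=
  (∀ x ∈ D, 0 ≤ u1 x) ∧ (∀ x ∈ D, 0 ≤ u0 x) ∧ (∀ x ∈ D, 0 ≤ um1 x) ∧
  ContDiffOn ℝ 1 u1 D ∧ ContDiffOn ℝ 1 u0 D ∧ ContDiffOn ℝ 1 um1 D ∧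
  IntegrableOn (fun x => ‖gradient u1 x‖ ^ 2) D ∧
  IntegrableOn (fun x => ‖gradient u0 x‖ ^ 2) D ∧
  IntegrableOn (fun x => ‖gradient um1 x‖ ^ 2) D ∧
  IntegrableOn (fun x => V x * rho u1 u0 um1 x) D ∧
  IntegrableOn (fun x => (rho u1 u0 um1 x) ^ 2) D ∧
  IntegrableOn (fun x => spinDen cs u1 u0 um1 x) D ∧
  (∫ x in D, rho u1 u0 um1 x) = N ∧
  (∫ x in D, ((u1 x) ^ 2 - (um1 x) ^ 2)) = M

/-- A ground state: an admissible triple minimizing the energy over `𝒜`. -/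
def IsGroundState {d : ℕ} (D : Set (Euc d)) (V : Euc d → ℝ) (cn cs N M : ℝ)
    (u1 u0 um1 : Euc d → ℝ) : Prop :=
  Admissible D V cn cs N M u1 u0 um1 ∧
  ∀ v1 v0 vm1 : Euc d → ℝ, Admissible D V cn cs N M v1 v0 vm1 →
    Energy D V cn cs u1 u0 um1 ≤ Energy D V cn cs v1 v0 vm1

/-- The Euler–Lagrange (coupled Gross–Pitaevskii) system with multipliers `μ`, `λ`. -/
def ELSystem {d : ℕ} (D : Set (Euc d)) (V : Euc d → ℝ) (cn cs mu lam : ℝ)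
    (u1 u0 um1 : Euc d → ℝ) : Prop :=
  ∀ x ∈ D,
    (mu + lam) * u1 x =
      -lap u1 x + V x * u1 x + 2 * cn * rho u1 u0 um1 x * u1 x
        + 2 * cs * ((u0 x) ^ 2 * (u1 x + spinSign cs * um1 x)
            + u1 x * ((u1 x) ^ 2 - (um1 x) ^ 2)) ∧
    mu * u0 x =
      -lap u0 x + V x * u0 x + 2 * cn * rho u1 u0 um1 x * u0 x
        + 2 * cs * (u0 x * (u1 x + spinSign cs * um1 x) ^ 2) ∧
    (mu - lam) * um1 x =
      -lap um1 x + V x * um1 x + 2 * cn * rho u1 u0 um1 x * um1 x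
        + 2 * cs * ((u0 x) ^ 2 * (um1 x + spinSign cs * u1 x)
            + um1 x * ((um1 x) ^ 2 - (u1 x) ^ 2))

lemma grad_const_mul {d : ℕ} (c : ℝ) (f : Euc d → ℝ) (x : Euc d) :
    gradient (fun y => c * f y) x = c • gradient f x := by
  by_cases hc : c = 0
  · simp [hc, gradient]
  · by_cases hdf : DifferentiableAt ℝ f x
    · rw [gradient, gradient, fderiv_const_mul hdf c, _root_.map_smul]
    · have h2 : ¬ DifferentiableAt ℝ (fun y => c * f y) x := by
        intro h
        have := h.const_mul c⁻¹
        simp only [← mul_assoc, inv_mul_cancel₀ hc, one_mul] at this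
        exact hdf this
      rw [gradient_eq_zero_of_not_differentiableAt hdf,
        gradient_eq_zero_of_not_differentiableAt h2, smul_zero]

lemma grad_sq_const_mul {d : ℕ} (c : ℝ) (f : Euc d → ℝ) (x : Euc d) :
    ‖gradient (fun y => c * f y) x‖ ^ 2 = c ^ 2 * ‖gradient f x‖ ^ 2 := by
  rw [grad_const_mul, norm_smul]
  simp [mul_pow, sq_abs]

lemma energy_scaled {d : ℕ}
    (D : Set (Euc d)) (V : Euc d → ℝ)
    (cn cs N M : ℝ) (hN : 0 < N) (hcs : cs < 0)
    (γ1 γ0 γm1 : ℝ) (hγ1 : 0 ≤ γ1) (hγ0 : 0 ≤ γ0) (hγm1 : 0 ≤ γm1)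
    (hsum : γ1 ^ 2 + γ0 ^ 2 + γm1 ^ 2 = 1) (hdiff : γ1 ^ 2 - γm1 ^ 2 = M / N)
    (f : Euc d → ℝ) (hf0 : ∀ x ∈ D, 0 ≤ f x) (hfC : ContDiffOn ℝ 1 f D)
    (hint1 : IntegrableOn (fun x => ‖gradient f x‖ ^ 2) D)
    (hint2 : IntegrableOn (fun x => V x * (f x) ^ 2) D)
    (hint3 : IntegrableOn (fun x => (f x) ^ 4) D)
    (hmass : (∫ x in D, (f x) ^ 2) = N) :
    Admissible D V cn cs N M
      (fun x => γ1 * f x) (fun x => γ0 * f x) (fun x => γm1 * f x) ∧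
    Energy D V cn cs (fun x => γ1 * f x) (fun x => γ0 * f x) (fun x => γm1 * f x)
      = (∫ x in D, (‖gradient f x‖ ^ 2 + V x * (f x) ^ 2))
        + (cn + cs * (2 * γ0 ^ 2 * (γ1 + γm1) ^ 2 + M ^ 2 / N ^ 2))
          * ∫ x in D, (f x) ^ 4 := by
  set P : ℝ := 2 * γ0 ^ 2 * (γ1 + γm1) ^ 2 + M ^ 2 / N ^ 2 with hP
  have hrho : ∀ x, rho (fun x => γ1 * f x) (fun x => γ0 * f x) (fun x => γm1 * f x) x
      = (f x) ^ 2 := by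
    intro x
    unfold rho
    linear_combination (f x ^ 2) * hsum
  have hspin : ∀ x, spinDen cs (fun x => γ1 * f x) (fun x => γ0 * f x)
      (fun x => γm1 * f x) x = P * (f x) ^ 4 := by
    intro x
    unfold spinDen spinSign
    rw [if_pos hcs, hP]
    linear_combination (f x ^ 4 * (γ1 ^ 2 - γm1 ^ 2 + M / N)) * hdiff
  have hkey : ∀ x, eDen V cn cs (fun x => γ1 * f x) (fun x => γ0 * f x)
      (fun x => γm1 * f x) x
      = (‖gradient f x‖ ^ 2 + V x * (f x) ^ 2) + (cn + cs * P) * (f x) ^ 4 := by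
    intro x
    unfold eDen
    rw [hrho, hspin, grad_sq_const_mul, grad_sq_const_mul, grad_sq_const_mul]
    have : γ1 ^ 2 * ‖gradient f x‖ ^ 2 + γ0 ^ 2 * ‖gradient f x‖ ^ 2
        + γm1 ^ 2 * ‖gradient f x‖ ^ 2 = ‖gradient f x‖ ^ 2 := by
      linear_combination (‖gradient f x‖ ^ 2) * hsum
    rw [this]; ring
  have hmag : (∫ x in D, (((fun x => γ1 * f x) x) ^ 2 - ((fun x => γm1 * f x) x) ^ 2)) = M := by
    have : ∀ x : Euc d, (γ1 * f x) ^ 2 - (γm1 * f x) ^ 2 = (M / N) * (f x) ^ 2 := by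
      intro x
      linear_combination (f x ^ 2) * hdiff
    simp only [this]
    rw [MeasureTheory.integral_const_mul, hmass]
    field_simp
  refine ⟨⟨fun x hx => mul_nonneg hγ1 (hf0 x hx), fun x hx => mul_nonneg hγ0 (hf0 x hx),
    fun x hx => mul_nonneg hγm1 (hf0 x hx),
    contDiffOn_const.mul hfC, contDiffOn_const.mul hfC, contDiffOn_const.mul hfC,
    ?_, ?_, ?_, ?_, ?_, ?_, ?_, hmag⟩, ?_⟩
  · simpa only [grad_sq_const_mul, IntegrableOn] using hint1.const_mul (γ1 ^ 2)
  · simpa only [grad_sq_const_mul, IntegrableOn] using hint1.const_mul (γ0 ^ 2)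
  · simpa only [grad_sq_const_mul, IntegrableOn] using hint1.const_mul (γm1 ^ 2)
  · simpa only [hrho] using hint2
  · simp only [hrho]
    have : ∀ x : Euc d, ((f x) ^ 2) ^ 2 = (f x) ^ 4 := fun x => by ring
    simpa only [this] using hint3
  · simpa only [hspin, IntegrableOn] using hint3.const_mul P
  · simp only [hrho]; exact hmass
  · have heq : (fun x => eDen V cn cs (fun x => γ1 * f x) (fun x => γ0 * f x)
        (fun x => γm1 * f x) x)
        = fun x => (‖gradient f x‖ ^ 2 + V x * (f x) ^ 2) + (cn + cs * P) * (f x) ^ 4 :=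
      funext hkey
    have hA : IntegrableOn (fun x => ‖gradient f x‖ ^ 2 + V x * (f x) ^ 2) D :=
      hint1.add hint2
    have hB : IntegrableOn (fun x => (cn + cs * P) * (f x) ^ 4) D :=
      hint3.const_mul _
    rw [Energy, heq, integral_add hA hB, MeasureTheory.integral_const_mul]

/-- Energy of a single-mode triple (`c_s < 0`): if `γ = (γ₁, γ₀, γ₋₁) ≥ 0` satisfies
`γ₁² + γ₀² + γ₋₁² = 1` and `γ₁² − γ₋₁² = M/N`, and `f ∈ 𝒜ˢ`, then `γf ∈ 𝒜` and
`𝔼[γf] = ∫_D (‖∇f‖² + Vf²) + (c_n + c_s P(γ)) ∫_D f⁴`, where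
`P(γ) = 2γ₀²(γ₁ + γ₋₁)² + M²/N²`. In particular
`𝔼[γ⋆f] = ∫_D (‖∇f‖² + Vf² + (c_n + c_s)f⁴)` for
`γ⋆ = ((1 + M/N)/2, √((1 − M²/N²)/2), (1 − M/N)/2)`. -/
theorem energy_of_single_mode_triple {d : ℕ} (hd : 1 ≤ d)
    (D : Set (Euc d)) (hDopen : IsOpen D) (hDne : D.Nonempty) (hDconn : IsConnected D)
    (V : Euc d → ℝ) (hV : ContinuousOn V D)
    (cn cs N M : ℝ) (hN : 0 < N) (hM : |M| < N) (hcs : cs < 0)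
    (γ1 γ0 γm1 : ℝ) (hγ1 : 0 ≤ γ1) (hγ0 : 0 ≤ γ0) (hγm1 : 0 ≤ γm1)
    (hsum : γ1 ^ 2 + γ0 ^ 2 + γm1 ^ 2 = 1) (hdiff : γ1 ^ 2 - γm1 ^ 2 = M / N)
    (f : Euc d → ℝ) (hf0 : ∀ x ∈ D, 0 ≤ f x) (hfC : ContDiffOn ℝ 1 f D)
    (hint1 : IntegrableOn (fun x => ‖gradient f x‖ ^ 2) D)
    (hint2 : IntegrableOn (fun x => V x * (f x) ^ 2) D)
    (hint3 : IntegrableOn (fun x => (f x) ^ 4) D)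
    (hmass : (∫ x in D, (f x) ^ 2) = N) :
    Admissible D V cn cs N M
      (fun x => γ1 * f x) (fun x => γ0 * f x) (fun x => γm1 * f x) ∧
    Energy D V cn cs (fun x => γ1 * f x) (fun x => γ0 * f x) (fun x => γm1 * f x)
      = (∫ x in D, (‖gradient f x‖ ^ 2 + V x * (f x) ^ 2))
        + (cn + cs * (2 * γ0 ^ 2 * (γ1 + γm1) ^ 2 + M ^ 2 / N ^ 2))
          * ∫ x in D, (f x) ^ 4 ∧
    Energy D V cn cs
        (fun x => (1 + M / N) / 2 * f x)
        (fun x => Real.sqrt ((1 - M ^ 2 / N ^ 2) / 2) * f x)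
        (fun x => (1 - M / N) / 2 * f x)
      = ∫ x in D,
          (‖gradient f x‖ ^ 2 + V x * (f x) ^ 2 + (cn + cs) * (f x) ^ 4) := by

  have hN0 : N ≠ 0 := ne_of_gt hN
  have hmn : |M / N| < 1 := by
    rw [abs_div, abs_of_pos hN]
    exact (div_lt_one hN).mpr hM
  obtain ⟨hm1, hm2⟩ := abs_lt.mp hmn
  have harg : 0 ≤ (1 - M ^ 2 / N ^ 2) / 2 := by
    have : M ^ 2 / N ^ 2 = (M / N) ^ 2 := by rw [div_pow]
    nlinarith [sq_nonneg (M / N)]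
  have hγ1' : (0 : ℝ) ≤ (1 + M / N) / 2 := by linarith
  have hγ0' : (0 : ℝ) ≤ Real.sqrt ((1 - M ^ 2 / N ^ 2) / 2) := Real.sqrt_nonneg _
  have hγm1' : (0 : ℝ) ≤ (1 - M / N) / 2 := by linarith
  have hsq : Real.sqrt ((1 - M ^ 2 / N ^ 2) / 2) ^ 2 = (1 - M ^ 2 / N ^ 2) / 2 :=
    Real.sq_sqrt harg
  have hsum' : ((1 + M / N) / 2) ^ 2 + Real.sqrt ((1 - M ^ 2 / N ^ 2) / 2) ^ 2
      + ((1 - M / N) / 2) ^ 2 = 1 := by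
    rw [hsq]; ring
  have hdiff' : ((1 + M / N) / 2) ^ 2 - ((1 - M / N) / 2) ^ 2 = M / N := by ring
  obtain ⟨hAdm, hEn⟩ := energy_scaled D V cn cs N M hN hcs γ1 γ0 γm1 hγ1 hγ0 hγm1
    hsum hdiff f hf0 hfC hint1 hint2 hint3 hmass
  refine ⟨hAdm, hEn, ?_⟩
  obtain ⟨_, hEn'⟩ := energy_scaled D V cn cs N M hN hcs _ _ _ hγ1' hγ0' hγm1'
    hsum' hdiff' f hf0 hfC hint1 hint2 hint3 hmass
  rw [hEn']
  have hc : cn + cs * (2 * Real.sqrt ((1 - M ^ 2 / N ^ 2) / 2) ^ 2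
      * ((1 + M / N) / 2 + (1 - M / N) / 2) ^ 2 + M ^ 2 / N ^ 2) = cn + cs := by
    rw [hsq]; ring
  rw [hc]
  have hA : IntegrableOn (fun x => ‖gradient f x‖ ^ 2 + V x * (f x) ^ 2) D :=
    hint1.add hint2
  have hB : IntegrableOn (fun x => (cn + cs) * (f x) ^ 4) D :=
    hint3.const_mul _
  rw [integral_add hA hB, MeasureTheory.integral_const_mul]
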